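/- For a category D, the projection functor Tw(D)^op → D sending a morphism (x → y) to its source x is colimit-cofinal (a colim-equivalence); in particular, the classifying space of Tw(D) is weakly homotopy equivalent to that of D. -/

import Mathlib

open CategoryTheory Opposite

universe v u

/-- The twisted arrow category of `D`: objects are morphisms of `D`. -/
structure Tw (D : Type u) [Category.{v} D] : Type (max u v) where
  X : D
  Y : D
  f : X ⟶ Y

variable (D : Type u) [Category.{v} D]

/-- A morphism `f ⟶ g` in `Tw D` is a pair `(a, b)` with `g = a ≫ f ≫ b`. -/
instance : Category (Tw D) where
  Hom F G := {p : (G.X ⟶ F.X) × (F.Y ⟶ G.Y) // G.f = p.1 ≫ F.f ≫ p.2}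
  id F := ⟨(𝟙 F.X, 𝟙 F.Y), by simp⟩
  comp {F G H} f g := ⟨(g.1.1 ≫ f.1.1, f.1.2 ≫ g.1.2), by
    obtain ⟨⟨a, b⟩, hf⟩ := f
    obtain ⟨⟨c, d⟩, hg⟩ := g
    dsimp only at *
    rw [hg, hf]
    simp⟩

/-- The projection `Tw(D)ᵒᵖ ⥤ D` sending a morphism `(x ⟶ y)` to its source `x`. -/
def TwProj : (Tw D)ᵒᵖ ⥤ D where
  obj F := F.unop.X
  map h := h.unop.1.1

/-- the projection `Tw(D)ᵒᵖ ⥤ D`, `(x → y) ↦ x`, is colimit-cofinal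
(a colim-equivalence); in particular `|Tw(D)| ≃ |D|`. -/
theorem stmt_10 : (TwProj D).Final := by
  constructor
  intro d
  let base : StructuredArrow d (TwProj D) :=
    StructuredArrow.mk (Y := op (⟨d, d, 𝟙 d⟩ : Tw D)) (𝟙 d)
  have : Nonempty (StructuredArrow d (TwProj D)) := ⟨base⟩
  apply zigzag_isConnected
  have key : ∀ g : StructuredArrow d (TwProj D), Zigzag g base := by
    intro g
    obtain ⟨⟨⟩, F, u⟩ := g
    set F' : Tw D := ⟨d, F.unop.Y, u ≫ F.unop.f⟩ with hF'
    let mid : StructuredArrow d (TwProj D) := StructuredArrow.mk (Y := op F') (𝟙 d)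
    have m1 : mid ⟶ StructuredArrow.mk (Y := F) u := by
      refine StructuredArrow.homMk (Quiver.Hom.op (⟨(u, 𝟙 _), by simp [hF']; rfl⟩ : F.unop ⟶ F')) ?_
      simp [TwProj, mid]
      exact Category.id_comp _
    have m2 : mid ⟶ base := by
      refine StructuredArrow.homMk
        (Quiver.Hom.op (⟨(𝟙 d, u ≫ F.unop.f), by simp [hF']; exact (Category.id_comp _).symm⟩ :
          (⟨d, d, 𝟙 d⟩ : Tw D) ⟶ F')) ?_
      simp [TwProj, mid, base]
    exact Relation.ReflTransGen.trans
      (Relation.ReflTransGen.single (Or.inr ⟨m1⟩))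
      (Relation.ReflTransGen.single (Or.inl ⟨m2⟩))
  intro j₁ j₂
  exact (key j₁).trans (zigzag_symmetric.symm _ _ (key j₂))
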